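/- Let k, L ≥ 2, let t be a bias partition with L = 2ℓ+1 classes and p a rounding vector, and suppose the oblivious algorithm satisfies α(Obl_k^{t,p}) ≥ α. Let Ψ be any Max-kAND instance and suppose M̂ ∈ ℝ^{Ptn_k^L} satisfies ‖Snap_Ψ^t − M̂‖_1 := Σ_{c ∈ Ptn_k^L} |Snap_Ψ^t(c) − M̂(c)| ≤ ε. Then (α − 2^{k+1}ε)·val_Ψ ≤ Σ_{c ∈ Ptn_k^L} prob^p(c)·M̂(c) − ε ≤ val_Ψ. -/
import Mathlib


open scoped BigOperators
open Classical

/-- An instance of Max-kAND on `n` Boolean variables. -/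
structure KAndInstance (k n : ℕ) where
  m : ℕ
  pos : Fin m → Finset (Fin n)
  neg : Fin m → Finset (Fin n)
  w : Fin m → ℝ
  disj : ∀ j, Disjoint (pos j) (neg j)
  arity : ∀ j, (pos j ∪ neg j).card = k
  w_nonneg : ∀ j, 0 ≤ w j
  w_total : 0 < ∑ j, w j
  cover : ∀ v : Fin n, ∃ j, 0 < w j ∧ (v ∈ pos j ∨ v ∈ neg j)

namespace KAndInstance
variable {k n : ℕ} (Ψ : KAndInstance k n)

/-- A clause is satisfied by a ±1 assignment (encoded as `Bool`, `true` = +1). -/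
def sat (x : Fin n → Bool) (j : Fin Ψ.m) : Prop :=
  (∀ v ∈ Ψ.pos j, x v = true) ∧ (∀ v ∈ Ψ.neg j, x v = false)

/-- The (fractional) value of an assignment. -/
noncomputable def val (x : Fin n → Bool) : ℝ :=
  (∑ j, if Ψ.sat x j then Ψ.w j else 0) / (∑ j, Ψ.w j)

/-- The value of the instance: the maximum value over assignments. -/
noncomputable def optVal : ℝ := ⨆ x : Fin n → Bool, Ψ.val x

/-- Total weight of clauses containing `v` positively. -/
noncomputable def wpos (v : Fin n) : ℝ := ∑ j, if v ∈ Ψ.pos j then Ψ.w j else 0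

/-- Total weight of clauses containing `v` negatively. -/
noncomputable def wneg (v : Fin n) : ℝ := ∑ j, if v ∈ Ψ.neg j then Ψ.w j else 0

/-- The bias of a variable. -/
noncomputable def bias (v : Fin n) : ℝ := (Ψ.wpos v - Ψ.wneg v) / (Ψ.wpos v + Ψ.wneg v)

end KAndInstance

/-- A symmetric partition of `[-1,1]` into `2ℓ+1` bias classes, given by
`0 ≤ t 0 < t 1 < ⋯ < t ℓ = 1` (values of `t` beyond index `ℓ` are irrelevant). -/
structure BiasPartition (ℓ : ℕ) where
  t : ℕ → ℝ
  t0_nonneg : 0 ≤ t 0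
  mono : ∀ i, i < ℓ → t i < t (i + 1)
  t_top : t ℓ = 1

namespace BiasPartition
variable {ℓ : ℕ} (T : BiasPartition ℓ)

/-- Raw index (in `{0,…,2ℓ}`, with `ℓ` = bias class `0`, `ℓ+i` = class `+i`,
`ℓ-i` = class `-i`) of the bias class containing a bias value `b`. -/
noncomputable def classIdx (b : ℝ) : ℕ :=
  if |b| ≤ T.t 0 then ℓ
  else if 0 < b then ℓ + sInf {i : ℕ | b ≤ T.t i}
  else ℓ - sInf {i : ℕ | -b ≤ T.t i}

end BiasPartition

/-- Extends a rounding vector `p = (p 1, …, p ℓ)` to a function on raw class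
indices: the probability of assigning `+1` to a variable in raw class `r`. -/
noncomputable def pExt (ℓ : ℕ) (p : ℕ → ℝ) (r : ℕ) : ℝ :=
  if r = ℓ then 1/2 else if ℓ < r then p (r - ℓ) else 1 - p (ℓ - r)

/-- The probability with which the oblivious algorithm rounds a variable of
bias `b` to `+1`. -/
noncomputable def roundProb {ℓ : ℕ} (T : BiasPartition ℓ) (p : ℕ → ℝ) (b : ℝ) : ℝ :=
  pExt ℓ p (T.classIdx b)

/-- `Obl_k^{t,p}(Ψ)`: the expected value of the random assignment produced by the
oblivious algorithm, which independently rounds each variable to `+1` with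
probability `roundProb T p (bias v)`. -/
noncomputable def oblValue {k n ℓ : ℕ} (T : BiasPartition ℓ) (p : ℕ → ℝ)
    (Ψ : KAndInstance k n) : ℝ :=
  ∑ x : Fin n → Bool,
    (∏ v, if x v then roundProb T p (Ψ.bias v) else 1 - roundProb T p (Ψ.bias v)) * Ψ.val x

/-- `α(Obl_k^{t,p})`: the approximation ratio of the oblivious algorithm, i.e. the
infimum over all instances `Ψ` of `Obl_k^{t,p}(Ψ) / val_Ψ`. -/
noncomputable def oblRatio (k ℓ : ℕ) (T : BiasPartition ℓ) (p : ℕ → ℝ) : ℝ :=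
  sInf { r : ℝ | ∃ (n : ℕ) (Ψ : KAndInstance k n), r = oblValue T p Ψ / Ψ.optVal }

/-- `γ_k`. -/
noncomputable def gammaStar (k : ℕ) : ℝ := if Odd k then 1/k else 1/(k+1)

/-- `p*_k = (1+γ_k)/2`. -/
noncomputable def pStar (k : ℕ) : ℝ := (1 + gammaStar k)/2

/-- `α*_k = 2 (p*_k (1-p*_k))^⌊k/2⌋`. -/
noncomputable def alphaStar (k : ℕ) : ℝ := 2 * (pStar k * (1 - pStar k))^(k/2)

/-- The number of positive variables of clause `j` whose bias class has raw
index `r` (this is `c_i^+` of the pattern `ptn^t(C_j)`, for `r = ℓ + i`). -/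
noncomputable def clausePtnPos {k n ℓ : ℕ} (T : BiasPartition ℓ) (Ψ : KAndInstance k n)
    (j : Fin Ψ.m) (r : ℕ) : ℕ :=
  ((Ψ.pos j).filter (fun v => T.classIdx (Ψ.bias v) = r)).card

/-- The number of negative variables of clause `j` whose bias class has raw
index `r` (this is `c_i^-` of the pattern `ptn^t(C_j)`, for `r = ℓ + i`). -/
noncomputable def clausePtnNeg {k n ℓ : ℕ} (T : BiasPartition ℓ) (Ψ : KAndInstance k n)
    (j : Fin Ψ.m) (r : ℕ) : ℕ :=
  ((Ψ.neg j).filter (fun v => T.classIdx (Ψ.bias v) = r)).card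

/-- `prob^p(c)` for a pattern given by raw class-indexed count functions
`cp cm : ℕ → ℕ` (raw index `ℓ` is bias class `0`, `ℓ+i` is class `+i`, and
`ℓ-i` is class `-i`): this is
`2^{-(c₀⁺+c₀⁻)} ∏_{i=1}^ℓ p_i^{c_{+i}⁺+c_{-i}⁻} (1-p_i)^{c_{+i}⁻+c_{-i}⁺}`,
with the convention `0^0 = 1`. -/
noncomputable def patProbRaw (ℓ : ℕ) (p : ℕ → ℝ) (cp cm : ℕ → ℕ) : ℝ :=
  (1/2 : ℝ) ^ (cp ℓ + cm ℓ) *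
    ∏ i ∈ Finset.Icc 1 ℓ, (p i) ^ (cp (ℓ + i) + cm (ℓ - i)) * (1 - p i) ^ (cm (ℓ + i) + cp (ℓ - i))

/-- A clause pattern in `Ptn_k^L` (`L = 2ℓ+1`): a tuple of counts
`(c_i^+, c_i^-)` for each bias class `i ∈ {-ℓ,…,+ℓ}`, all natural numbers,
summing to `k`.  The raw index `r : Fin (2ℓ+1)` encodes the bias class `r - ℓ`
(so raw index `ℓ` is class `0`, `ℓ+i` is class `+i`, and `ℓ-i` is class `-i`). -/
def Ptn (k ℓ : ℕ) :=
  { c : Fin (2*ℓ+1) → Fin (k+1) × Fin (k+1) //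
    ∑ i, (((c i).1 : ℕ) + ((c i).2 : ℕ)) = k }

noncomputable instance (k ℓ : ℕ) : Fintype (Ptn k ℓ) := by
  unfold Ptn; infer_instance

namespace Ptn

/-- `c_i^+` read off at raw class index `r` (zero out of range). -/
def cp {k ℓ : ℕ} (c : Ptn k ℓ) (r : ℕ) : ℕ :=
  if h : r < 2*ℓ+1 then ((c.1 ⟨r, h⟩).1 : ℕ) else 0

/-- `c_i^-` read off at raw class index `r` (zero out of range). -/
def cm {k ℓ : ℕ} (c : Ptn k ℓ) (r : ℕ) : ℕ :=
  if h : r < 2*ℓ+1 then ((c.1 ⟨r, h⟩).2 : ℕ) else 0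

/-- Membership in `PosPtn_k^L`: a pattern with no negated literals. -/
def IsPos {k ℓ : ℕ} (c : Ptn k ℓ) : Prop := ∀ i, ((c.1 i).2 : ℕ) = 0

end Ptn

/-- `prob^p(c)` for a pattern `c ∈ Ptn_k^L`, with the convention `0^0 = 1`:
`2^{-(c₀⁺+c₀⁻)} ∏_{i=1}^ℓ p_i^{c_{+i}⁺+c_{-i}⁻} (1-p_i)^{c_{+i}⁻+c_{-i}⁺}`. -/
noncomputable def patProb {k ℓ : ℕ} (p : ℕ → ℝ) (c : Ptn k ℓ) : ℝ :=
  (1/2 : ℝ) ^ (c.cp ℓ + c.cm ℓ) *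
    ∏ i ∈ Finset.Icc 1 ℓ,
      (p i) ^ (c.cp (ℓ + i) + c.cm (ℓ - i)) * (1 - p i) ^ (c.cm (ℓ + i) + c.cp (ℓ - i))

/-- `t_i^- = inf Int_i`, read off at raw class index `r` (class `i = r - ℓ`). -/
noncomputable def tLo {ℓ : ℕ} (T : BiasPartition ℓ) (r : ℕ) : ℝ :=
  if r = ℓ then -T.t 0 else if ℓ < r then T.t (r - ℓ - 1) else -T.t (ℓ - r)

/-- `t_i^+ = sup Int_i`, read off at raw class index `r` (class `i = r - ℓ`). -/
noncomputable def tHi {ℓ : ℕ} (T : BiasPartition ℓ) (r : ℕ) : ℝ :=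
  if r = ℓ then T.t 0 else if ℓ < r then T.t (r - ℓ) else -T.t (ℓ - r - 1)

/-- `W⁺(i) = ∑_c c_i^+ W(c)`, at raw class index `r`. -/
noncomputable def Wp {k ℓ : ℕ} (W : Ptn k ℓ → ℝ) (r : ℕ) : ℝ :=
  ∑ c : Ptn k ℓ, (c.cp r : ℝ) * W c

/-- `W⁻(i) = ∑_c c_i^- W(c)`, at raw class index `r`. -/
noncomputable def Wm {k ℓ : ℕ} (W : Ptn k ℓ → ℝ) (r : ℕ) : ℝ :=
  ∑ c : Ptn k ℓ, (c.cm r : ℝ) * W c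

/-- The snapshot array `Snap_Ψ^t(c)`: the fraction of the total weight carried
by clauses whose pattern is `c`.  (A clause has pattern `c` iff its raw
class-indexed counts agree with those of `c` everywhere.) -/
noncomputable def snap {k n ℓ : ℕ} (T : BiasPartition ℓ) (Ψ : KAndInstance k n)
    (c : Ptn k ℓ) : ℝ :=
  (∑ j, if (∀ r, clausePtnPos T Ψ j r = c.cp r ∧ clausePtnNeg T Ψ j r = c.cm r)
      then Ψ.w j else 0) / (∑ j, Ψ.w j)


section Aux

open Finset

variable {k n ℓ : ℕ}

lemma sum_prod_bool (n : ℕ) (q : Fin n → ℝ) :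
    ∑ x : Fin n → Bool, ∏ v, (if x v then q v else 1 - q v) = 1 := by
  classical
  have hps := Finset.prod_univ_sum (fun _ : Fin n => (Finset.univ : Finset Bool))
    (fun v b => if b then q v else 1 - q v)
  rw [Fintype.piFinset_univ] at hps
  rw [← hps]
  have h : ∀ v : Fin n, (∑ b : Bool, if b then q v else 1 - q v) = 1 := by
    intro v
    rw [Fintype.sum_bool]
    norm_num
  rw [Finset.prod_congr rfl fun v _ => h v, Finset.prod_const_one]

lemma prod_ite_mem (A B : Finset (Fin n)) (hAB : Disjoint A B) (f g : Fin n → ℝ) :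
    (∏ v : Fin n, (if v ∈ A then f v else if v ∈ B then g v else 1))
    = (∏ v ∈ A, f v) * ∏ v ∈ B, g v := by
  classical
  have h1 : (∏ v : Fin n, (if v ∈ A then f v else if v ∈ B then g v else 1))
      = ∏ v ∈ A ∪ B, (if v ∈ A then f v else if v ∈ B then g v else 1) := by
    symm
    apply Finset.prod_subset (Finset.subset_univ _)
    intro v _ hv
    simp only [Finset.mem_union, not_or] at hv
    simp [hv.1, hv.2]
  rw [h1, Finset.prod_union hAB]
  congr 1
  · exact Finset.prod_congr rfl fun v hv => by simp [hv]
  · exact Finset.prod_congr rfl fun v hv => by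
      simp [hv, Finset.disjoint_right.mp hAB hv]

namespace KAndInstance
variable (Ψ : KAndInstance k n)

lemma wpos_nonneg (v : Fin n) : 0 ≤ Ψ.wpos v := by
  apply Finset.sum_nonneg
  intro j _
  by_cases h : v ∈ Ψ.pos j <;> simp [h, Ψ.w_nonneg j]

lemma wneg_nonneg (v : Fin n) : 0 ≤ Ψ.wneg v := by
  apply Finset.sum_nonneg
  intro j _
  by_cases h : v ∈ Ψ.neg j <;> simp [h, Ψ.w_nonneg j]

lemma denom_pos (v : Fin n) : 0 < Ψ.wpos v + Ψ.wneg v := by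
  obtain ⟨j, hw, hv⟩ := Ψ.cover v
  have h1 := Ψ.wpos_nonneg v
  have h2 := Ψ.wneg_nonneg v
  rcases hv with hv | hv
  · have : Ψ.w j ≤ Ψ.wpos v := by
      have := Finset.single_le_sum (f := fun i => if v ∈ Ψ.pos i then Ψ.w i else 0)
        (fun i _ => by by_cases h : v ∈ Ψ.pos i <;> simp [h, Ψ.w_nonneg i]) (Finset.mem_univ j)
      simpa [KAndInstance.wpos, hv] using this
    linarith
  · have : Ψ.w j ≤ Ψ.wneg v := by
      have := Finset.single_le_sum (f := fun i => if v ∈ Ψ.neg i then Ψ.w i else 0)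
        (fun i _ => by by_cases h : v ∈ Ψ.neg i <;> simp [h, Ψ.w_nonneg i]) (Finset.mem_univ j)
      simpa [KAndInstance.wneg, hv] using this
    linarith

lemma abs_bias_le (v : Fin n) : |Ψ.bias v| ≤ 1 := by
  have hd := Ψ.denom_pos v
  have h1 := Ψ.wpos_nonneg v
  have h2 := Ψ.wneg_nonneg v
  rw [KAndInstance.bias, abs_div, abs_of_pos hd, div_le_one hd]
  exact abs_le.mpr ⟨by linarith, by linarith⟩

lemma sum_sat (q : Fin n → ℝ) (j : Fin Ψ.m) :
    ∑ x : Fin n → Bool,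
        (∏ v, if x v then q v else 1 - q v) * (if Ψ.sat x j then Ψ.w j else 0)
    = Ψ.w j * ((∏ v ∈ Ψ.pos j, q v) * ∏ v ∈ Ψ.neg j, (1 - q v)) := by
  classical
  have key : ∀ x : Fin n → Bool,
      (∏ v, if x v then q v else 1 - q v) * (if Ψ.sat x j then Ψ.w j else 0)
      = Ψ.w j * ∏ v : Fin n, ((if x v then q v else 1 - q v) *
          (if v ∈ Ψ.pos j then (if x v then (1:ℝ) else 0)
            else if v ∈ Ψ.neg j then (if x v then 0 else 1) else 1)) := by
    intro x
    rw [Finset.prod_mul_distrib]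
    have hind : (∏ v : Fin n, (if v ∈ Ψ.pos j then (if x v then (1:ℝ) else 0)
        else if v ∈ Ψ.neg j then (if x v then 0 else 1) else 1))
        = if Ψ.sat x j then 1 else 0 := by
      rw [prod_ite_mem (Ψ.pos j) (Ψ.neg j) (Ψ.disj j)]
      have e1 : (∏ v ∈ Ψ.pos j, (if x v then (1:ℝ) else 0))
          = if (∀ v ∈ Ψ.pos j, x v = true) then 1 else 0 := by
        have : (∏ v ∈ Ψ.pos j, (if x v then (1:ℝ) else 0))
            = ∏ v ∈ Ψ.pos j, (if x v = true then (1:ℝ) else 0) :=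
          Finset.prod_congr rfl fun v _ => by cases hxv : x v <;> simp [hxv]
        rw [this]
        simp [Finset.prod_boole]
      have e2 : (∏ v ∈ Ψ.neg j, (if x v then (0:ℝ) else 1))
          = if (∀ v ∈ Ψ.neg j, x v = false) then 1 else 0 := by
        have : (∏ v ∈ Ψ.neg j, (if x v then (0:ℝ) else 1))
            = ∏ v ∈ Ψ.neg j, (if x v = false then (1:ℝ) else 0) :=
          Finset.prod_congr rfl fun v _ => by cases hxv : x v <;> simp [hxv]
        rw [this]
        simp [Finset.prod_boole]
      rw [e1, e2]
      rcases Classical.em (∀ v ∈ Ψ.pos j, x v = true) with hA | hA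
      · rcases Classical.em (∀ v ∈ Ψ.neg j, x v = false) with hB | hB
        · rw [if_pos hA, if_pos hB, if_pos (show Ψ.sat x j from ⟨hA, hB⟩)]
          norm_num
        · rw [if_pos hA, if_neg hB, if_neg (show ¬ Ψ.sat x j from fun h => hB h.2)]
          norm_num
      · rw [if_neg hA, if_neg (show ¬ Ψ.sat x j from fun h => hA h.1)]
        ring
    rw [hind]
    by_cases h : Ψ.sat x j <;> simp [h] <;> ring
  rw [Finset.sum_congr rfl fun x _ => key x, ← Finset.mul_sum]
  congr 1
  have hps := Finset.prod_univ_sum (fun _ : Fin n => (Finset.univ : Finset Bool))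
    (fun v b => (if b then q v else 1 - q v) *
      (if v ∈ Ψ.pos j then (if b then (1:ℝ) else 0)
        else if v ∈ Ψ.neg j then (if b then 0 else 1) else 1))
  rw [Fintype.piFinset_univ] at hps
  rw [← hps]
  have h : ∀ v : Fin n, (∑ b : Bool, ((if b then q v else 1 - q v) *
      (if v ∈ Ψ.pos j then (if b then (1:ℝ) else 0)
        else if v ∈ Ψ.neg j then (if b then 0 else 1) else 1)))
      = (if v ∈ Ψ.pos j then q v else if v ∈ Ψ.neg j then 1 - q v else 1) := by
    intro v
    rw [Fintype.sum_bool]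
    by_cases h1 : v ∈ Ψ.pos j
    · simp [h1]
    · by_cases h2 : v ∈ Ψ.neg j <;> simp [h1, h2] <;> ring
  rw [Finset.prod_congr rfl fun v _ => h v,
    prod_ite_mem (Ψ.pos j) (Ψ.neg j) (Ψ.disj j)]

lemma sum_obl (q : Fin n → ℝ) :
    ∑ x : Fin n → Bool, (∏ v, if x v then q v else 1 - q v) * Ψ.val x
    = (∑ j, Ψ.w j * ((∏ v ∈ Ψ.pos j, q v) * ∏ v ∈ Ψ.neg j, (1 - q v))) / (∑ j, Ψ.w j) := by
  simp only [KAndInstance.val, ← mul_div_assoc]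
  rw [← Finset.sum_div]
  congr 1
  have h : ∀ x : Fin n → Bool,
      (∏ v, if x v then q v else 1 - q v) * (∑ j, if Ψ.sat x j then Ψ.w j else 0)
      = ∑ j, (∏ v, if x v then q v else 1 - q v) * (if Ψ.sat x j then Ψ.w j else 0) := by
    intro x
    rw [Finset.mul_sum]
  rw [Finset.sum_congr rfl fun x _ => h x, Finset.sum_comm]
  exact Finset.sum_congr rfl fun j _ => Ψ.sum_sat q j

lemma val_nonneg (x : Fin n → Bool) : 0 ≤ Ψ.val x := by
  apply div_nonneg _ (le_of_lt Ψ.w_total)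
  apply Finset.sum_nonneg
  intro j _
  by_cases h : Ψ.sat x j <;> simp [h, Ψ.w_nonneg j]

lemma val_le_optVal (x : Fin n → Bool) : Ψ.val x ≤ Ψ.optVal :=
  le_ciSup (Set.Finite.bddAbove (Set.finite_range _)) x

lemma optVal_nonneg : 0 ≤ Ψ.optVal :=
  le_trans (Ψ.val_nonneg (fun _ => true)) (Ψ.val_le_optVal _)

lemma card_pos_add_card_neg (j : Fin Ψ.m) : (Ψ.pos j).card + (Ψ.neg j).card = k := by
  rw [← Finset.card_union_of_disjoint (Ψ.disj j)]
  exact Ψ.arity j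

lemma pow_le_optVal : (1/2 : ℝ)^k ≤ Ψ.optVal := by
  have h := Ψ.sum_obl (fun _ => 1/2)
  have hs : ∀ x : Fin n → Bool,
      (∏ v : Fin n, if x v then (1/2:ℝ) else 1 - 1/2) = (1/2:ℝ)^n := by
    intro x
    have : ∀ v : Fin n, (if x v then (1/2:ℝ) else 1 - 1/2) = 1/2 := by
      intro v
      cases hxv : x v <;> norm_num [hxv]
    rw [Finset.prod_congr rfl fun v _ => this v, Finset.prod_const]
    simp
  have h2 : (∑ j, Ψ.w j * ((∏ v ∈ Ψ.pos j, (1/2:ℝ)) * ∏ v ∈ Ψ.neg j, (1 - 1/2:ℝ)))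
      / (∑ j, Ψ.w j) = (1/2:ℝ)^k := by
    have hterm : ∀ j, Ψ.w j * ((∏ v ∈ Ψ.pos j, (1/2:ℝ)) * ∏ v ∈ Ψ.neg j, (1 - 1/2:ℝ))
        = Ψ.w j * (1/2:ℝ)^k := by
      intro j
      rw [Finset.prod_const, Finset.prod_const, show (1 - 1/2 : ℝ) = 1/2 by norm_num,
        ← pow_add, Ψ.card_pos_add_card_neg j]
    rw [Finset.sum_congr rfl fun j _ => hterm j, ← Finset.sum_mul, mul_comm,
      mul_div_assoc, div_self (ne_of_gt Ψ.w_total), mul_one]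
  have h3 : ∑ x : Fin n → Bool, (1/2:ℝ)^n = 1 := by
    have := sum_prod_bool n (fun _ => (1/2:ℝ))
    rwa [Finset.sum_congr rfl fun x _ => hs x] at this
  calc (1/2:ℝ)^k
      = ∑ x : Fin n → Bool, (1/2:ℝ)^n * Ψ.val x := by
        rw [← h2, ← h]
        exact Finset.sum_congr rfl fun x _ => by rw [hs x]
    _ ≤ ∑ x : Fin n → Bool, (1/2:ℝ)^n * Ψ.optVal := by
        apply Finset.sum_le_sum
        intro x _
        exact mul_le_mul_of_nonneg_left (Ψ.val_le_optVal x) (by positivity)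
    _ = Ψ.optVal := by rw [← Finset.sum_mul, h3, one_mul]

lemma optVal_pos : 0 < Ψ.optVal := lt_of_lt_of_le (by positivity) Ψ.pow_le_optVal

end KAndInstance

lemma BiasPartition.classIdx_le (T : BiasPartition ℓ) {b : ℝ} (hb : |b| ≤ 1) :
    T.classIdx b ≤ 2 * ℓ := by
  unfold BiasPartition.classIdx
  split_ifs with h1 h2
  · omega
  · have hmem : ℓ ∈ {i : ℕ | b ≤ T.t i} := by
      simp only [Set.mem_setOf_eq]
      calc b ≤ |b| := le_abs_self b
        _ ≤ 1 := hb
        _ = T.t ℓ := T.t_top.symm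
    have := Nat.sInf_le hmem
    omega
  · omega

lemma pExt_mem {p : ℕ → ℝ} (hp : ∀ i, 1 ≤ i → i ≤ ℓ → p i ∈ Set.Icc (0:ℝ) 1)
    (hℓ : 1 ≤ ℓ) {r : ℕ} (hr : r ≤ 2*ℓ) : pExt ℓ p r ∈ Set.Icc (0:ℝ) 1 := by
  unfold pExt
  split_ifs with h1 h2
  · norm_num
  · exact hp (r - ℓ) (by omega) (by omega)
  · have h := hp (ℓ - r) (by omega) (by omega)
    rw [Set.mem_Icc] at h ⊢
    constructor <;> linarith [h.1, h.2]

lemma roundProb_mem {p : ℕ → ℝ} (T : BiasPartition ℓ)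
    (hp : ∀ i, 1 ≤ i → i ≤ ℓ → p i ∈ Set.Icc (0:ℝ) 1) (hℓ : 1 ≤ ℓ)
    {b : ℝ} (hb : |b| ≤ 1) : roundProb T p b ∈ Set.Icc (0:ℝ) 1 :=
  pExt_mem hp hℓ (T.classIdx_le hb)

lemma clausePtnPos_le (T : BiasPartition ℓ) (Ψ : KAndInstance k n) (j : Fin Ψ.m) (r : ℕ) :
    clausePtnPos T Ψ j r ≤ k := by
  calc clausePtnPos T Ψ j r ≤ (Ψ.pos j).card := Finset.card_filter_le _ _
    _ ≤ (Ψ.pos j ∪ Ψ.neg j).card := Finset.card_le_card Finset.subset_union_left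
    _ = k := Ψ.arity j

lemma clausePtnNeg_le (T : BiasPartition ℓ) (Ψ : KAndInstance k n) (j : Fin Ψ.m) (r : ℕ) :
    clausePtnNeg T Ψ j r ≤ k := by
  calc clausePtnNeg T Ψ j r ≤ (Ψ.neg j).card := Finset.card_filter_le _ _
    _ ≤ (Ψ.pos j ∪ Ψ.neg j).card := Finset.card_le_card Finset.subset_union_right
    _ = k := Ψ.arity j

/-- The pattern of clause `j`. -/
noncomputable def ptnOf (T : BiasPartition ℓ) (Ψ : KAndInstance k n) (j : Fin Ψ.m) :
    Ptn k ℓ :=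
  ⟨fun i => (⟨clausePtnPos T Ψ j i, Nat.lt_succ_of_le (clausePtnPos_le T Ψ j i)⟩,
             ⟨clausePtnNeg T Ψ j i, Nat.lt_succ_of_le (clausePtnNeg_le T Ψ j i)⟩), by
    classical
    have hb : ∀ v : Fin n, T.classIdx (Ψ.bias v) < 2*ℓ+1 := fun v =>
      Nat.lt_succ_of_le (T.classIdx_le (Ψ.abs_bias_le v))
    have hpos : (∑ i : Fin (2*ℓ+1), clausePtnPos T Ψ j i) = (Ψ.pos j).card := by
      rw [Finset.card_eq_sum_card_fiberwise
        (f := fun v => (⟨T.classIdx (Ψ.bias v), hb v⟩ : Fin (2*ℓ+1))) (t := Finset.univ)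
        (fun v _ => Finset.mem_univ _)]
      apply Finset.sum_congr rfl
      intro i _
      unfold clausePtnPos
      congr 1
      apply Finset.filter_congr
      intro v _
      simp [Fin.ext_iff]
    have hneg : (∑ i : Fin (2*ℓ+1), clausePtnNeg T Ψ j i) = (Ψ.neg j).card := by
      rw [Finset.card_eq_sum_card_fiberwise
        (f := fun v => (⟨T.classIdx (Ψ.bias v), hb v⟩ : Fin (2*ℓ+1))) (t := Finset.univ)
        (fun v _ => Finset.mem_univ _)]
      apply Finset.sum_congr rfl
      intro i _
      unfold clausePtnNeg
      congr 1
      apply Finset.filter_congr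
      intro v _
      simp [Fin.ext_iff]
    show (∑ i : Fin (2*ℓ+1), (clausePtnPos T Ψ j i + clausePtnNeg T Ψ j i)) = k
    rw [Finset.sum_add_distrib, hpos, hneg, ← Finset.card_union_of_disjoint (Ψ.disj j)]
    exact Ψ.arity j⟩

lemma ptnOf_cp (T : BiasPartition ℓ) (Ψ : KAndInstance k n) (j : Fin Ψ.m) (r : ℕ) :
    (ptnOf T Ψ j).cp r = clausePtnPos T Ψ j r := by
  unfold ptnOf Ptn.cp
  split_ifs with h
  · rfl
  · symm
    unfold clausePtnPos
    rw [Finset.card_eq_zero, Finset.filter_eq_empty_iff]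
    intro v _
    have := T.classIdx_le (Ψ.abs_bias_le v)
    omega

lemma ptnOf_cm (T : BiasPartition ℓ) (Ψ : KAndInstance k n) (j : Fin Ψ.m) (r : ℕ) :
    (ptnOf T Ψ j).cm r = clausePtnNeg T Ψ j r := by
  unfold ptnOf Ptn.cm
  split_ifs with h
  · rfl
  · symm
    unfold clausePtnNeg
    rw [Finset.card_eq_zero, Finset.filter_eq_empty_iff]
    intro v _
    have := T.classIdx_le (Ψ.abs_bias_le v)
    omega

lemma matches_iff (T : BiasPartition ℓ) (Ψ : KAndInstance k n) (j : Fin Ψ.m)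
    (c : Ptn k ℓ) :
    (∀ r, clausePtnPos T Ψ j r = c.cp r ∧ clausePtnNeg T Ψ j r = c.cm r)
    ↔ c = ptnOf T Ψ j := by
  constructor
  · intro h
    apply Subtype.ext
    funext i
    have h1 := (h i.1).1
    have h2 := (h i.1).2
    have hc1 : c.cp i.1 = ((c.1 i).1 : ℕ) := by
      simp only [Ptn.cp, dif_pos i.isLt, Fin.eta]
    have hc2 : c.cm i.1 = ((c.1 i).2 : ℕ) := by
      simp only [Ptn.cm, dif_pos i.isLt, Fin.eta]
    have e1 : ((c.1 i).1 : ℕ) = clausePtnPos T Ψ j i.1 := by omega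
    have e2 : ((c.1 i).2 : ℕ) = clausePtnNeg T Ψ j i.1 := by omega
    apply Prod.ext <;> apply Fin.ext
    · exact e1
    · exact e2
  · rintro rfl r
    exact ⟨(ptnOf_cp T Ψ j r).symm, (ptnOf_cm T Ψ j r).symm⟩

lemma prod_split (ℓ : ℕ) (F : ℕ → ℝ) :
    (∏ r ∈ Finset.range (2*ℓ+1), F r)
    = F ℓ * ∏ i ∈ Finset.Icc 1 ℓ, (F (ℓ+i) * F (ℓ-i)) := by
  have h1 : (∏ i ∈ Finset.Icc 1 ℓ, (F (ℓ+i) * F (ℓ-i)))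
      = (∏ i ∈ Finset.Icc 1 ℓ, F (ℓ+i)) * ∏ i ∈ Finset.Icc 1 ℓ, F (ℓ-i) :=
    Finset.prod_mul_distrib
  have h2 : (∏ i ∈ Finset.Icc 1 ℓ, F (ℓ+i)) = ∏ i ∈ Finset.range ℓ, F (ℓ+1+i) := by
    rw [← Finset.Ico_add_one_right_eq_Icc, Finset.prod_Ico_eq_prod_range]
    apply Finset.prod_congr (by norm_num)
    intro i _
    congr 1
    omega
  have h3 : (∏ i ∈ Finset.Icc 1 ℓ, F (ℓ-i)) = ∏ r ∈ Finset.range ℓ, F r := by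
    rw [← Finset.prod_range_reflect (fun r => F r) ℓ, ← Finset.Ico_add_one_right_eq_Icc,
      Finset.prod_Ico_eq_prod_range]
    apply Finset.prod_congr (by norm_num)
    intro i _
    congr 1
    omega
  have h4 : 2*ℓ+1 = (ℓ+1) + ℓ := by omega
  rw [h1, h2, h3, h4, Finset.prod_range_add F (ℓ+1) ℓ, Finset.prod_range_succ]
  ring

lemma prod_eq_patProb (T : BiasPartition ℓ) (p : ℕ → ℝ) (Ψ : KAndInstance k n)
    (j : Fin Ψ.m) :
    (∏ v ∈ Ψ.pos j, roundProb T p (Ψ.bias v)) *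
      ∏ v ∈ Ψ.neg j, (1 - roundProb T p (Ψ.bias v))
    = patProb p (ptnOf T Ψ j) := by
  classical
  have hb : ∀ v : Fin n, T.classIdx (Ψ.bias v) ∈ Finset.range (2*ℓ+1) := fun v =>
    Finset.mem_range.mpr (Nat.lt_succ_of_le (T.classIdx_le (Ψ.abs_bias_le v)))
  have hpos : (∏ v ∈ Ψ.pos j, roundProb T p (Ψ.bias v))
      = ∏ r ∈ Finset.range (2*ℓ+1), (pExt ℓ p r) ^ (clausePtnPos T Ψ j r) := by
    rw [← Finset.prod_fiberwise_of_maps_to (fun v _ => hb v)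
      (fun v => roundProb T p (Ψ.bias v))]
    apply Finset.prod_congr rfl
    intro r _
    rw [show (clausePtnPos T Ψ j r : ℕ)
      = ((Ψ.pos j).filter (fun v => T.classIdx (Ψ.bias v) = r)).card from rfl,
      ← Finset.prod_const]
    apply Finset.prod_congr rfl
    intro v hv
    rw [Finset.mem_filter] at hv
    unfold roundProb
    rw [hv.2]
  have hneg : (∏ v ∈ Ψ.neg j, (1 - roundProb T p (Ψ.bias v)))
      = ∏ r ∈ Finset.range (2*ℓ+1), (1 - pExt ℓ p r) ^ (clausePtnNeg T Ψ j r) := by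
    rw [← Finset.prod_fiberwise_of_maps_to (fun v _ => hb v)
      (fun v => 1 - roundProb T p (Ψ.bias v))]
    apply Finset.prod_congr rfl
    intro r _
    rw [show (clausePtnNeg T Ψ j r : ℕ)
      = ((Ψ.neg j).filter (fun v => T.classIdx (Ψ.bias v) = r)).card from rfl,
      ← Finset.prod_const]
    apply Finset.prod_congr rfl
    intro v hv
    rw [Finset.mem_filter] at hv
    unfold roundProb
    rw [hv.2]
  rw [hpos, hneg, ← Finset.prod_mul_distrib,
    prod_split ℓ (fun r => (pExt ℓ p r) ^ (clausePtnPos T Ψ j r)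
      * (1 - pExt ℓ p r) ^ (clausePtnNeg T Ψ j r))]
  unfold patProb
  simp only [ptnOf_cp, ptnOf_cm]
  have hc : pExt ℓ p ℓ = 1/2 := by unfold pExt; rw [if_pos rfl]
  congr 1
  · rw [hc, show (1 - 1/2 : ℝ) = 1/2 by norm_num, ← pow_add]
  · apply Finset.prod_congr rfl
    intro i hi
    rw [Finset.mem_Icc] at hi
    have e1 : pExt ℓ p (ℓ + i) = p i := by
      unfold pExt
      rw [if_neg (by omega), if_pos (by omega)]
      congr 1
      omega
    have e2 : pExt ℓ p (ℓ - i) = 1 - p i := by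
      unfold pExt
      rw [if_neg (by omega), if_neg (by omega)]
      have : ℓ - (ℓ - i) = i := by omega
      rw [this]
    rw [e1, e2, show (1 - (1 - p i)) = p i by ring, pow_add, pow_add]
    ring

lemma patProb_mem {p : ℕ → ℝ} (hp : ∀ i, 1 ≤ i → i ≤ ℓ → p i ∈ Set.Icc (0:ℝ) 1)
    (c : Ptn k ℓ) : patProb p c ∈ Set.Icc (0:ℝ) 1 := by
  unfold patProb
  have hterm : ∀ i ∈ Finset.Icc 1 ℓ,
      (0:ℝ) ≤ (p i) ^ (c.cp (ℓ + i) + c.cm (ℓ - i))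
        * (1 - p i) ^ (c.cm (ℓ + i) + c.cp (ℓ - i)) ∧
      (p i) ^ (c.cp (ℓ + i) + c.cm (ℓ - i))
        * (1 - p i) ^ (c.cm (ℓ + i) + c.cp (ℓ - i)) ≤ 1 := by
    intro i hi
    rw [Finset.mem_Icc] at hi
    obtain ⟨h0, h1⟩ := hp i hi.1 hi.2
    constructor
    · apply mul_nonneg (pow_nonneg h0 _) (pow_nonneg (by linarith) _)
    · refine le_trans (mul_le_mul (pow_le_one₀ h0 h1)
        (pow_le_one₀ (by linarith) (by linarith))
        (pow_nonneg (by linarith) _) zero_le_one) ?_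
      norm_num
  constructor
  · apply mul_nonneg (by positivity)
    exact Finset.prod_nonneg fun i hi => (hterm i hi).1
  · refine le_trans (mul_le_mul (pow_le_one₀ (by norm_num) (by norm_num))
      (Finset.prod_le_one (fun i hi => (hterm i hi).1) (fun i hi => (hterm i hi).2))
      (Finset.prod_nonneg fun i hi => (hterm i hi).1) zero_le_one) ?_
    norm_num

lemma obl_eq_sum (T : BiasPartition ℓ) (p : ℕ → ℝ) (Ψ : KAndInstance k n) :
    oblValue T p Ψ = ∑ c : Ptn k ℓ, patProb p c * snap T Ψ c := by
  classical
  unfold oblValue snap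
  rw [Ψ.sum_obl (fun v => roundProb T p (Ψ.bias v))]
  simp only [← mul_div_assoc]
  rw [← Finset.sum_div]
  congr 1
  have h : ∀ c : Ptn k ℓ,
      patProb p c * (∑ j, if (∀ r, clausePtnPos T Ψ j r = c.cp r
          ∧ clausePtnNeg T Ψ j r = c.cm r) then Ψ.w j else 0)
      = ∑ j, (if c = ptnOf T Ψ j then patProb p c * Ψ.w j else 0) := by
    intro c
    rw [Finset.mul_sum]
    apply Finset.sum_congr rfl
    intro j _
    rw [if_congr (matches_iff T Ψ j c) rfl rfl]
    by_cases hc : c = ptnOf T Ψ j <;> simp [hc]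
  rw [Finset.sum_congr rfl fun c _ => h c, Finset.sum_comm]
  apply Finset.sum_congr rfl
  intro j _
  rw [Finset.sum_ite_eq' Finset.univ (ptnOf T Ψ j) (fun c => patProb p c * Ψ.w j),
    if_pos (Finset.mem_univ _), ← prod_eq_patProb T p Ψ j]
  ring

lemma oblValue_nonneg (T : BiasPartition ℓ) {p : ℕ → ℝ}
    (hp : ∀ i, 1 ≤ i → i ≤ ℓ → p i ∈ Set.Icc (0:ℝ) 1) (hℓ : 1 ≤ ℓ)
    (Ψ : KAndInstance k n) : 0 ≤ oblValue T p Ψ := by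
  apply Finset.sum_nonneg
  intro x _
  apply mul_nonneg _ (Ψ.val_nonneg x)
  apply Finset.prod_nonneg
  intro v _
  have h := roundProb_mem T hp hℓ (Ψ.abs_bias_le v)
  rw [Set.mem_Icc] at h
  by_cases hx : x v = true <;> simp [hx] <;> linarith [h.1, h.2]

lemma oblValue_le_optVal (T : BiasPartition ℓ) {p : ℕ → ℝ}
    (hp : ∀ i, 1 ≤ i → i ≤ ℓ → p i ∈ Set.Icc (0:ℝ) 1) (hℓ : 1 ≤ ℓ)
    (Ψ : KAndInstance k n) : oblValue T p Ψ ≤ Ψ.optVal := by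
  have hwt : ∀ x : Fin n → Bool,
      0 ≤ ∏ v, (if x v then roundProb T p (Ψ.bias v) else 1 - roundProb T p (Ψ.bias v)) := by
    intro x
    apply Finset.prod_nonneg
    intro v _
    have h := roundProb_mem T hp hℓ (Ψ.abs_bias_le v)
    rw [Set.mem_Icc] at h
    by_cases hx : x v = true <;> simp [hx] <;> linarith [h.1, h.2]
  calc oblValue T p Ψ
      ≤ ∑ x : Fin n → Bool,
          (∏ v, if x v then roundProb T p (Ψ.bias v) else 1 - roundProb T p (Ψ.bias v))
            * Ψ.optVal := by
        apply Finset.sum_le_sum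
        intro x _
        exact mul_le_mul_of_nonneg_left (Ψ.val_le_optVal x) (hwt x)
    _ = Ψ.optVal := by
        rw [← Finset.sum_mul, sum_prod_bool n (fun v => roundProb T p (Ψ.bias v)), one_mul]

end Aux

set_option maxHeartbeats 1000000 in
/-- **Estimating the value from an approximate snapshot.**  If the oblivious
algorithm `Obl_k^{t,p}` has approximation ratio at least `α`, and
`M̂ : Ptn_k^L → ℝ` satisfies `‖Snap_Ψ^t - M̂‖₁ ≤ ε`, then
`(α - 2^{k+1}ε)·val_Ψ ≤ ∑_c prob^p(c)·M̂(c) - ε ≤ val_Ψ`. -/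
theorem snapshot_estimate (k ℓ : ℕ) (hk : 2 ≤ k) (hℓ : 1 ≤ ℓ)
    (T : BiasPartition ℓ) (p : ℕ → ℝ)
    (hp : ∀ i, 1 ≤ i → i ≤ ℓ → p i ∈ Set.Icc (0 : ℝ) 1)
    (α : ℝ) (hα : α ≤ oblRatio k ℓ T p)
    {n : ℕ} (Ψ : KAndInstance k n) (Mhat : Ptn k ℓ → ℝ) (ε : ℝ)
    (hM : ∑ c : Ptn k ℓ, |snap T Ψ c - Mhat c| ≤ ε) :
    (α - 2 ^ (k + 1) * ε) * Ψ.optVal ≤ (∑ c : Ptn k ℓ, patProb p c * Mhat c) - ε ∧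
    (∑ c : Ptn k ℓ, patProb p c * Mhat c) - ε ≤ Ψ.optVal := by
  classical
  have hε : 0 ≤ ε :=
    le_trans (Finset.sum_nonneg fun c _ => abs_nonneg _) hM
  have hV := Ψ.pow_le_optVal
  have hVpos := Ψ.optVal_pos
  have hobl : oblValue T p Ψ = ∑ c : Ptn k ℓ, patProb p c * snap T Ψ c :=
    obl_eq_sum T p Ψ
  have hle : oblValue T p Ψ ≤ Ψ.optVal := oblValue_le_optVal T hp hℓ Ψ
  -- α·optVal ≤ oblValue
  have hmem : oblValue T p Ψ / Ψ.optVal ∈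
      { r : ℝ | ∃ (n : ℕ) (Ψ : KAndInstance k n), r = oblValue T p Ψ / Ψ.optVal } :=
    ⟨n, Ψ, rfl⟩
  have hbdd : BddBelow
      { r : ℝ | ∃ (n : ℕ) (Ψ : KAndInstance k n), r = oblValue T p Ψ / Ψ.optVal } := by
    refine ⟨0, fun r hr => ?_⟩
    obtain ⟨n', Ψ', rfl⟩ := hr
    exact div_nonneg (oblValue_nonneg T hp hℓ Ψ') Ψ'.optVal_nonneg
  have hratio : α ≤ oblValue T p Ψ / Ψ.optVal :=
    le_trans hα (csInf_le hbdd hmem)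
  have h4 : α * Ψ.optVal ≤ oblValue T p Ψ := (le_div_iff₀ hVpos).mp hratio
  -- |S - M| ≤ ε
  have h1 : |(∑ c : Ptn k ℓ, patProb p c * snap T Ψ c)
      - ∑ c : Ptn k ℓ, patProb p c * Mhat c| ≤ ε := by
    rw [← Finset.sum_sub_distrib]
    refine le_trans (Finset.abs_sum_le_sum_abs _ _) (le_trans ?_ hM)
    apply Finset.sum_le_sum
    intro c _
    rw [← mul_sub, abs_mul]
    have hpc := patProb_mem hp c
    rw [Set.mem_Icc] at hpc
    calc |patProb p c| * |snap T Ψ c - Mhat c|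
        ≤ 1 * |snap T Ψ c - Mhat c| := by
          apply mul_le_mul_of_nonneg_right _ (abs_nonneg _)
          rw [abs_of_nonneg hpc.1]
          exact hpc.2
      _ = |snap T Ψ c - Mhat c| := one_mul _
  rw [abs_le] at h1
  have hpow : (2:ℝ)^(k+1) * (1/2)^k = 2 := by
    rw [div_pow, one_pow]
    field_simp
    ring
  have hεV : 2 * ε ≤ 2^(k+1) * ε * Ψ.optVal := by
    have hmul : 2^(k+1) * ε * (1/2:ℝ)^k ≤ 2^(k+1) * ε * Ψ.optVal :=
      mul_le_mul_of_nonneg_left hV (mul_nonneg (by positivity) hε)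
    have : 2 * ε = 2^(k+1) * ε * (1/2:ℝ)^k := by
      linear_combination ε * hpow.symm
    linarith
  constructor
  · nlinarith [h1.1, h1.2, h4, hobl, hle]
  · linarith [h1.1, h1.2, h4, hobl ▸ hle]
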